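/- The formula ¬○p ∧ ¬○¬p is satisfiable in an intuitionistic dynamic model. Specifically, in the model M with W = {w,v,u}, where x ≼ y iff x = y or (x = v and y = u), S(w) = v, S(v) = v, S(u) = u, and V(u) = {p}, V(w) = V(v) = ∅, we have M,w ⊨ ¬○p ∧ ¬○¬p. -/

import Mathlib

inductive Fml (P : Type) : Type
  | var (p : P)
  | bot
  | and (φ ψ : Fml P)
  | or (φ ψ : Fml P)
  | impl (φ ψ : Fml P)
  | next (φ : Fml P)
  | dia (φ : Fml P)
  | box (φ : Fml P)

def Fml.neg {P : Type} (φ : Fml P) : Fml P := Fml.impl φ Fml.bot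

/-- Intuitionistic temporal satisfaction over an explicit order `le`
    and successor function `S`. -/
def sat {P W : Type} (le : W → W → Prop) (S : W → W) (V : W → P → Prop) :
    Fml P → W → Prop
  | .var p, w => V w p
  | .bot, _ => False
  | .and φ ψ, w => sat le S V φ w ∧ sat le S V ψ w
  | .or φ ψ, w => sat le S V φ w ∨ sat le S V ψ w
  | .impl φ ψ, w => ∀ v, le w v → sat le S V φ v → sat le S V ψ v
  | .next φ, w => sat le S V φ (S w)
  | .dia φ, w => ∃ k : ℕ, sat le S V φ (S^[k] w)
  | .box φ, w => ∀ k : ℕ, sat le S V φ (S^[k] w)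

inductive W3 : Type
  | w | v | u
deriving DecidableEq

def le3 : W3 → W3 → Prop := fun x y => x = y ∨ (x = W3.v ∧ y = W3.u)

def S3 : W3 → W3
  | .w => .v
  | .v => .v
  | .u => .u

def V3 : W3 → Unit → Prop := fun x _ => x = W3.u

/-- `(W3, le3, S3, V3)` is an intuitionistic dynamic model (partial order,
    forward confluent, monotone valuation) satisfying `¬○p ∧ ¬○¬p` at `w`. -/
theorem neg_next_and_neg_next_neg_satisfiable :
    (∀ x, le3 x x) ∧
    (∀ a b c, le3 a b → le3 b c → le3 a c) ∧
    (∀ a b, le3 a b → le3 b a → a = b) ∧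
    (∀ a b, le3 a b → le3 (S3 a) (S3 b)) ∧
    (∀ a b, le3 a b → ∀ q, V3 a q → V3 b q) ∧
    sat le3 S3 V3
      (Fml.and (Fml.neg (Fml.next (Fml.var ())))
               (Fml.neg (Fml.next (Fml.neg (Fml.var ()))))) W3.w := by
  have hd : DecidablePred (fun x : W3 × W3 => le3 x.1 x.2) := by
    intro x; unfold le3; infer_instance
  refine ⟨fun x => Or.inl rfl, ?_, ?_, ?_, ?_, ?_, ?_⟩
  · rintro a b c h1 h2; cases a <;> cases b <;> cases c <;> simp_all [le3]
  · rintro a b h1 h2; cases a <;> cases b <;> simp_all [le3]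
  · rintro a b h; cases a <;> cases b <;> simp_all [le3, S3]
  · rintro a b h q hv; cases a <;> cases b <;> simp_all [le3, V3]
  · rintro x hx h; cases x <;> simp_all [le3, sat, S3, V3]
  · rintro x hx h
    cases x <;> simp_all [le3, sat, S3, V3]
    exact h W3.u (Or.inr ⟨rfl, rfl⟩) rfl
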